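/- Let d ≥ 2, and let v : (0,∞) → ℝ be continuous with: (i) there exist C > 0 and s ∈ (0,2) such that v(r) ≥ -C·r^{-s} for r ∈ (0,1], and (ii) v(r) → +∞ as r → +∞. For ℓ ∈ ℕ define m_ℓ := inf_{r > 0} (v(r) + ℓ(ℓ+d-2)/r²). Then m_ℓ > -∞ for every ℓ ≥ 1, and the map ℓ ↦ m_ℓ is strictly increasing on {ℓ ∈ ℕ : ℓ ≥ 1}. -/

import Mathlib

open Set Filter Topology

lemma aux_min (v : ℝ → ℝ) (hv : ContinuousOn v (Set.Ioi 0))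
    (C s : ℝ) (hC : 0 < C) (hs : s ∈ Set.Ioo (0 : ℝ) 2)
    (hlow : ∀ r ∈ Set.Ioc (0 : ℝ) 1, v r ≥ -C * r ^ (-s))
    (hinf : Filter.Tendsto v Filter.atTop Filter.atTop)
    (c : ℝ) (hc : 0 < c) :
    ∃ r₁ ∈ Set.Ioi (0:ℝ), ∀ r ∈ Set.Ioi (0:ℝ),
      v r₁ + c / r₁ ^ 2 ≤ v r + c / r ^ 2 := by
  set f : ℝ → ℝ := fun r => v r + c / r ^ 2 with hf
  -- Step 1: f → ∞ as r → 0+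
  have hpow0 : Tendsto (fun r : ℝ => C * r ^ (2 - s)) (𝓝[>] 0) (𝓝 0) := by
    have h0 : Tendsto (fun r : ℝ => r ^ (2 - s)) (𝓝 0) (𝓝 ((0:ℝ) ^ (2 - s))) := by
      apply (Real.continuousAt_rpow_const 0 (2 - s) (Or.inr (by linarith [hs.2]))).tendsto
    rw [Real.zero_rpow (by linarith [hs.2] : (2:ℝ) - s ≠ 0)] at h0
    have h0' : Tendsto (fun r : ℝ => C * r ^ (2 - s)) (𝓝 0) (𝓝 0) := by
      simpa using h0.const_mul C
    exact h0'.mono_left nhdsWithin_le_nhds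
  have hev : ∀ᶠ r in 𝓝[>] (0:ℝ), c / 2 / r ^ 2 ≤ f r := by
    have h1 : ∀ᶠ r in 𝓝[>] (0:ℝ), r ≤ 1 :=
      eventually_nhdsWithin_of_eventually_nhds
        (((gt_mem_nhds (by norm_num : (0:ℝ) < 1)) : ∀ᶠ x in 𝓝 (0:ℝ), x < 1).mono
          fun x hx => le_of_lt hx)
    have h2 : ∀ᶠ r in 𝓝[>] (0:ℝ), C * r ^ (2 - s) ≤ c / 2 :=
      hpow0.eventually (ge_mem_nhds (by linarith : (0:ℝ) < c / 2))
    filter_upwards [h1, h2, self_mem_nhdsWithin] with r hr1 hr2 hr0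
    have hr0' : (0:ℝ) < r := hr0
    have hlb := hlow r ⟨hr0', hr1⟩
    have hrs : r ^ (-s) = r ^ (2 - s) / r ^ 2 := by
      rw [eq_div_iff (by positivity : (r:ℝ) ^ 2 ≠ 0)]
      rw [← Real.rpow_natCast r 2, ← Real.rpow_add hr0']
      norm_num
      rw [show -s + 2 = 2 - s by ring]
    have h3 : -C * r ^ (-s) ≥ -(c / 2) / r ^ 2 := by
      rw [hrs, ge_iff_le, show -C * (r ^ (2 - s) / r ^ 2) = -(C * r ^ (2 - s)) / r ^ 2 by ring]
      gcongr
    have e1 : f r = v r + c / r ^ 2 := rfl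
    rw [e1]
    have e2 : c / r ^ 2 - c / 2 / r ^ 2 = c / 2 / r ^ 2 := by ring
    have e3 : -(c / 2) / r ^ 2 = -(c / 2 / r ^ 2) := by ring
    linarith
  have h0top : Tendsto f (𝓝[>] (0:ℝ)) atTop := by
    apply tendsto_atTop_mono' _ hev
    have hsq : Tendsto (fun r : ℝ => r ^ 2) (𝓝[>] 0) (𝓝[>] 0) := by
      apply tendsto_nhdsWithin_of_tendsto_nhds_of_eventually_within
      · have : Tendsto (fun r : ℝ => r ^ 2) (𝓝 0) (𝓝 (0 ^ 2)) := (continuous_pow 2).tendsto 0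
        simpa using this.mono_left nhdsWithin_le_nhds
      · filter_upwards [self_mem_nhdsWithin] with r hr
        exact pow_pos (show (0:ℝ) < r from hr) 2
    have := tendsto_inv_nhdsGT_zero.comp hsq
    have h2 := this.const_mul_atTop (by linarith : (0:ℝ) < c / 2)
    simpa [Function.comp, div_eq_mul_inv] using h2
  -- Step 2: f → ∞ at ∞
  have htop : Tendsto f atTop atTop := by
    apply tendsto_atTop_mono' _ _ hinf
    filter_upwards [eventually_ge_atTop (1:ℝ)] with r hr
    have : 0 ≤ c / r ^ 2 := by positivity
    simp only [hf]; linarith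
  -- Step 3: extract δ
  have h3 : ∃ δ > 0, ∀ r ∈ Ioc (0:ℝ) δ, f 1 ≤ f r := by
    have hh := h0top.eventually_ge_atTop (f 1)
    rw [Filter.eventually_iff, mem_nhdsGT_iff_exists_Ioc_subset] at hh
    obtain ⟨u, hu, hsub⟩ := hh
    exact ⟨u, hu, fun r hr => hsub hr⟩
  obtain ⟨δ, hδ, hδ'⟩ := h3
  -- Step 4: extract R
  obtain ⟨R, hR⟩ := (htop.eventually_ge_atTop (f 1)).exists_forall_of_atTop
  set a := min δ 1 with ha
  set b := max R 1 with hb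
  have ha0 : 0 < a := lt_min hδ one_pos
  have hab : a ≤ b := le_trans (min_le_right _ _) (le_max_right _ _)
  have hsub : Icc a b ⊆ Ioi (0:ℝ) := fun x hx => lt_of_lt_of_le ha0 hx.1
  have hcont : ContinuousOn f (Icc a b) := by
    apply ContinuousOn.add (hv.mono hsub)
    apply continuousOn_const.div (continuousOn_pow 2)
    intro x hx
    exact pow_ne_zero 2 (ne_of_gt (lt_of_lt_of_le ha0 hx.1))
  obtain ⟨r₁, hr₁m, hr₁min⟩ := isCompact_Icc.exists_isMinOn ⟨a, left_mem_Icc.mpr hab⟩ hcont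
  refine ⟨r₁, lt_of_lt_of_le ha0 hr₁m.1, fun r hr => ?_⟩
  have h1mem : (1:ℝ) ∈ Icc a b := ⟨min_le_right _ _, le_max_right _ _⟩
  have hr1le : f r₁ ≤ f 1 := hr₁min h1mem
  rcases lt_or_ge r a with hra | hra
  · exact le_trans hr1le (hδ' r ⟨hr, le_trans hra.le (min_le_left _ _)⟩)
  · rcases le_or_gt r b with hrb | hrb
    · exact hr₁min ⟨hra, hrb⟩
    · exact le_trans hr1le (hR r (le_trans (le_max_left _ _) hrb.le))


/-- Finiteness and strict monotonicity in `ℓ` of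
`m_ℓ = inf_{r>0} (v(r) + ℓ(ℓ+d-2)/r²)`. -/
theorem stmt11 (d : ℕ) (hd : 2 ≤ d) (v : ℝ → ℝ) (hv : ContinuousOn v (Set.Ioi 0))
    (C s : ℝ) (hC : 0 < C) (hs : s ∈ Set.Ioo (0 : ℝ) 2)
    (hlow : ∀ r ∈ Set.Ioc (0 : ℝ) 1, v r ≥ -C * r ^ (-s))
    (hinf : Filter.Tendsto v Filter.atTop Filter.atTop) :
    (∀ ℓ : ℕ, 1 ≤ ℓ →
      BddBelow ((fun r : ℝ => v r + (ℓ : ℝ) * ((ℓ : ℝ) + (d : ℝ) - 2) / r ^ 2) ''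
        Set.Ioi 0)) ∧
    (∀ ℓ ℓ' : ℕ, 1 ≤ ℓ → ℓ < ℓ' →
      sInf ((fun r : ℝ => v r + (ℓ : ℝ) * ((ℓ : ℝ) + (d : ℝ) - 2) / r ^ 2) '' Set.Ioi 0) <
      sInf ((fun r : ℝ => v r + (ℓ' : ℝ) * ((ℓ' : ℝ) + (d : ℝ) - 2) / r ^ 2) ''
        Set.Ioi 0)) := by
  have hd' : (2:ℝ) ≤ (d:ℝ) := by exact_mod_cast hd
  have hcpos : ∀ ℓ : ℕ, 1 ≤ ℓ → (0:ℝ) < (ℓ : ℝ) * ((ℓ : ℝ) + (d : ℝ) - 2) := by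
    intro ℓ hℓ
    have h1 : (1:ℝ) ≤ (ℓ:ℝ) := by exact_mod_cast hℓ
    nlinarith
  -- minimizer for each ℓ
  have hmin : ∀ ℓ : ℕ, 1 ≤ ℓ → ∃ r₁ ∈ Set.Ioi (0:ℝ), ∀ r ∈ Set.Ioi (0:ℝ),
      v r₁ + (ℓ : ℝ) * ((ℓ : ℝ) + (d : ℝ) - 2) / r₁ ^ 2 ≤
      v r + (ℓ : ℝ) * ((ℓ : ℝ) + (d : ℝ) - 2) / r ^ 2 :=
    fun ℓ hℓ => aux_min v hv C s hC hs hlow hinf _ (hcpos ℓ hℓ)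
  have hbdd : ∀ ℓ : ℕ, 1 ≤ ℓ →
      BddBelow ((fun r : ℝ => v r + (ℓ : ℝ) * ((ℓ : ℝ) + (d : ℝ) - 2) / r ^ 2) ''
        Set.Ioi 0) := by
    intro ℓ hℓ
    obtain ⟨r₁, hr₁, hmin'⟩ := hmin ℓ hℓ
    exact ⟨v r₁ + (ℓ : ℝ) * ((ℓ : ℝ) + (d : ℝ) - 2) / r₁ ^ 2,
      fun y ⟨r, hr, hry⟩ => hry ▸ hmin' r hr⟩
  refine ⟨hbdd, fun ℓ ℓ' hℓ hℓℓ' => ?_⟩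
  have hℓ' : 1 ≤ ℓ' := hℓ.trans hℓℓ'.le
  obtain ⟨r₁, hr₁, hmin'⟩ := hmin ℓ' hℓ'
  -- sInf for ℓ' equals the value at the minimizer
  have heq : sInf ((fun r : ℝ => v r + (ℓ' : ℝ) * ((ℓ' : ℝ) + (d : ℝ) - 2) / r ^ 2) ''
      Set.Ioi 0) = v r₁ + (ℓ' : ℝ) * ((ℓ' : ℝ) + (d : ℝ) - 2) / r₁ ^ 2 :=
    IsLeast.csInf_eq ⟨Set.mem_image_of_mem _ hr₁, fun y ⟨r, hr, hry⟩ => hry ▸ hmin' r hr⟩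
  rw [heq]
  calc sInf ((fun r : ℝ => v r + (ℓ : ℝ) * ((ℓ : ℝ) + (d : ℝ) - 2) / r ^ 2) '' Set.Ioi 0)
      ≤ v r₁ + (ℓ : ℝ) * ((ℓ : ℝ) + (d : ℝ) - 2) / r₁ ^ 2 :=
        csInf_le (hbdd ℓ hℓ) (Set.mem_image_of_mem _ hr₁)
    _ < v r₁ + (ℓ' : ℝ) * ((ℓ' : ℝ) + (d : ℝ) - 2) / r₁ ^ 2 := by
        have h1 : (1:ℝ) ≤ (ℓ:ℝ) := by exact_mod_cast hℓ
        have h2 : (ℓ:ℝ) < (ℓ':ℝ) := by exact_mod_cast hℓℓ'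
        have hr₁' : (0:ℝ) < r₁ := hr₁
        have hnum : (ℓ : ℝ) * ((ℓ : ℝ) + (d : ℝ) - 2) < (ℓ' : ℝ) * ((ℓ' : ℝ) + (d : ℝ) - 2) := by
          nlinarith
        have : (ℓ : ℝ) * ((ℓ : ℝ) + (d : ℝ) - 2) / r₁ ^ 2 <
            (ℓ' : ℝ) * ((ℓ' : ℝ) + (d : ℝ) - 2) / r₁ ^ 2 := by gcongr
        linarith
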